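/- Let 0 ≤ β < 1 and let P be analytic on D with P(0)=1, P'(0)=0, and Re P(z) > β for all z ∈ D. Then for all z ∈ D: |P(z) - (1+(1-2β)|z|⁴)/(1-|z|⁴)| ≤ 2(1-β)|z|²/(1-|z|⁴). -/

import Mathlib

open Complex Metric Set Filter
open scoped Topology

lemma schwarz_two (f : ℂ → ℂ) (hd : DifferentiableOn ℂ f (ball (0:ℂ) 1))
    (h0 : f 0 = 0) (h1 : deriv f 0 = 0)
    (hm : ∀ z ∈ ball (0:ℂ) 1, ‖f z‖ < 1) :
    ∀ z ∈ ball (0:ℂ) 1, ‖f z‖ ≤ (‖z‖) ^ 2 := by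
  set g := dslope f 0 with hg
  have hgd : DifferentiableOn ℂ g (ball (0:ℂ) 1) :=
    (differentiableOn_dslope (ball_mem_nhds _ one_pos)).mpr hd
  have hg0 : g 0 = 0 := by rw [hg, dslope_same, h1]
  have tid : Tendsto (fun r : ℝ => r) (𝓝[<] (1:ℝ)) (𝓝 1) :=
    tendsto_id.mono_left nhdsWithin_le_nhds
  -- Step A: ‖g z‖ ≤ 1 on the ball
  have hgle : ∀ z ∈ ball (0:ℂ) 1, ‖g z‖ ≤ 1 := by
    intro z hz
    rw [mem_ball, dist_zero_right] at hz
    have key : ∀ᶠ r in 𝓝[<] (1:ℝ), ‖g z‖ ≤ 1 / r := by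
      filter_upwards [Ioo_mem_nhdsLT_of_mem ⟨hz, le_rfl⟩] with r hr
      have hmaps : MapsTo f (ball (0:ℂ) r) (ball (f 0) 1) := by
        intro w hw
        rw [h0, mem_ball, dist_zero_right]
        exact hm w (mem_ball.2 ((mem_ball.1 hw).trans hr.2))
      exact Complex.norm_dslope_le_div_of_mapsTo_ball
        (hd.mono (ball_subset_ball hr.2.le)) (hmaps.mono_right ball_subset_closedBall)
        (mem_ball.2 (by rw [dist_zero_right]; exact hr.1))
    have t : Tendsto (fun r : ℝ => 1 / r) (𝓝[<] (1:ℝ)) (𝓝 (1/1)) :=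
      tendsto_const_nhds.div tid one_ne_zero
    rw [show (1:ℝ)/1 = 1 by norm_num] at t
    exact ge_of_tendsto t key
  -- Step B: ‖dslope g 0 z‖ ≤ 1
  set h := dslope g 0 with hh
  have hhle : ∀ z ∈ ball (0:ℂ) 1, ‖h z‖ ≤ 1 := by
    intro z hz
    rw [mem_ball, dist_zero_right] at hz
    have key : ∀ᶠ r in 𝓝[<] (1:ℝ), ‖h z‖ ≤ (1/r) / r := by
      filter_upwards [Ioo_mem_nhdsLT_of_mem ⟨hz, le_rfl⟩] with r hr
      have hr0 : (0:ℝ) < r := (norm_nonneg z).trans_lt hr.1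
      have hmaps : MapsTo g (ball (0:ℂ) r) (ball (g 0) (1/r)) := by
        intro w hw
        rw [hg0, mem_ball, dist_zero_right]
        have h1r : (1:ℝ) < 1/r := by
          rw [lt_div_iff₀ hr0]; simpa using hr.2
        exact lt_of_le_of_lt (hgle w (mem_ball.2 ((mem_ball.1 hw).trans hr.2))) h1r
      exact Complex.norm_dslope_le_div_of_mapsTo_ball
        (hgd.mono (ball_subset_ball hr.2.le)) (hmaps.mono_right ball_subset_closedBall)
        (mem_ball.2 (by rw [dist_zero_right]; exact hr.1))
    have t : Tendsto (fun r : ℝ => (1/r) / r) (𝓝[<] (1:ℝ)) (𝓝 ((1/1)/1)) :=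
      (tendsto_const_nhds.div tid one_ne_zero).div tid one_ne_zero
    rw [show (1:ℝ)/1/1 = 1 by norm_num] at t
    exact ge_of_tendsto t key
  -- conclude
  intro z hz
  have e1 : f z = z * g z := by
    have := sub_smul_dslope f 0 z
    simp only [sub_zero, smul_eq_mul, h0] at this
    exact this.symm
  have e2 : g z = z * h z := by
    have := sub_smul_dslope g 0 z
    simp only [sub_zero, smul_eq_mul, hg0] at this
    exact this.symm
  rw [e1, e2, norm_mul, norm_mul]
  have hb := hhle z hz
  nlinarith [norm_nonneg z, norm_nonneg (h z)]

theorem stmt_6 (β : ℝ) (hβ0 : 0 ≤ β) (hβ1 : β < 1)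
    (P : ℂ → ℂ) (hP : DifferentiableOn ℂ P (ball (0:ℂ) 1)) (hP0 : P 0 = 1)
    (hP'0 : deriv P 0 = 0)
    (hre : ∀ z ∈ ball (0:ℂ) 1, β < (P z).re) :
    ∀ z ∈ ball (0:ℂ) 1,
      ‖P z - (((1 + (1 - 2*β) * ‖z‖^4) / (1 - ‖z‖^4) : ℝ))‖
        ≤ 2 * (1 - β) * ‖z‖^2 / (1 - ‖z‖^4) := by
  set ω : ℂ → ℂ := fun z => (P z - 1) / (P z + 1 - ((2*β : ℝ) : ℂ)) with hω
  -- denominator never vanishes on the ball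
  have hden : ∀ z ∈ ball (0:ℂ) 1, P z + 1 - ((2*β : ℝ) : ℂ) ≠ 0 := by
    intro z hz h
    have hr := hre z hz
    have h2 : (P z + 1 - ((2*β : ℝ) : ℂ)).re = (P z).re + 1 - 2*β := by simp
    rw [h] at h2
    simp at h2
    linarith
  -- |ω| < 1 on the ball
  have habs : ∀ z ∈ ball (0:ℂ) 1, ‖ω z‖ < 1 := by
    intro z hz
    have hr := hre z hz
    have hd := hden z hz
    have hnum : ‖P z - 1‖ < ‖P z + 1 - ((2*β : ℝ) : ℂ)‖ := by
      have hsq : (‖P z - 1‖)^2 < (‖P z + 1 - ((2*β : ℝ) : ℂ)‖)^2 := by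
        rw [Complex.sq_norm, Complex.sq_norm, Complex.normSq_apply, Complex.normSq_apply]
        simp only [Complex.sub_re, Complex.sub_im, Complex.add_re, Complex.add_im,
          Complex.one_re, Complex.one_im, Complex.ofReal_re, Complex.ofReal_im]
        ring_nf
        nlinarith
      exact lt_of_pow_lt_pow_left₀ 2 (norm_nonneg _) hsq
    rw [hω]
    simp only [norm_div]
    rw [div_lt_one (norm_pos_iff.mpr hd)]
    exact hnum
  -- ω is differentiable, ω 0 = 0, ω' 0 = 0
  have hωd : DifferentiableOn ℂ ω (ball (0:ℂ) 1) :=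
    (hP.sub (differentiableOn_const 1)).div
      ((hP.add (differentiableOn_const 1)).sub (differentiableOn_const _)) hden
  have hω0 : ω 0 = 0 := by simp [hω, hP0]
  have hPd : DifferentiableAt ℂ P 0 := hP.differentiableAt (ball_mem_nhds _ one_pos)
  have hdP : HasDerivAt P 0 0 := by
    have := hPd.hasDerivAt
    rwa [hP'0] at this
  have hd0 : P 0 + 1 - ((2*β : ℝ) : ℂ) ≠ 0 := hden 0 (by simp)
  have hq := ((hdP.sub_const 1).div ((hdP.add_const 1).sub_const (((2*β : ℝ) : ℂ))) hd0)
  have hω'0 : deriv ω 0 = 0 := by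
    rw [hω]
    have := hq.deriv
    simp at this ⊢
    exact this
  have hsch := schwarz_two ω hωd hω0 hω'0 habs
  -- main estimate
  intro z hz
  set r : ℝ := ‖z‖ with hrdef
  have hr0 : 0 ≤ r := norm_nonneg z
  have hr1 : r < 1 := by
    rw [mem_ball, dist_zero_right] at hz
    rwa [hrdef]
  have hr4 : r^4 < 1 := pow_lt_one₀ hr0 hr1 (by norm_num)
  have hr4' : (0:ℝ) < 1 - r^4 := by linarith
  set w : ℂ := ω z with hwdef
  have hw2 : ‖w‖ ≤ r^2 := hsch z hz
  have hw1 : ‖w‖ < 1 := habs z hz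
  have h1w : (1:ℂ) - w ≠ 0 := by
    intro h
    have : w = 1 := by linear_combination -h
    rw [this] at hw1; simp at hw1
  have habs1w : 0 < ‖1 - w‖ := norm_pos_iff.mpr h1w
  -- the defining identity for w
  have hwid : w * (P z + 1 - 2*(β:ℂ)) = P z - 1 := by
    have : w * (P z + 1 - ((2*β : ℝ) : ℂ)) = P z - 1 := by
      rw [hwdef, hω]
      exact div_mul_cancel₀ _ (hden z hz)
    push_cast at this
    linear_combination this
  have hcr4 : ((1:ℂ) - (r:ℂ)^4) ≠ 0 := by
    intro h
    have : ((1 - r^4 : ℝ) : ℂ) = 0 := by push_cast; linear_combination h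
    rw [Complex.ofReal_eq_zero] at this
    linarith
  -- rewrite P z - c as a nice fraction
  have key : P z - (((1 + (1 - 2*β) * r^4) / (1 - r^4) : ℝ) : ℂ)
      = 2*(1-(β:ℂ))*(w - (r:ℂ)^4) / ((1-w)*(1 - (r:ℂ)^4)) := by
    rw [eq_div_iff (mul_ne_zero h1w hcr4)]
    have hc : ((((1 + (1 - 2*β) * r^4) / (1 - r^4)) : ℝ) : ℂ) * (1 - (r:ℂ)^4)
        = 1 + (1 - 2*(β:ℂ))*(r:ℂ)^4 := by
      rw [Complex.ofReal_div]
      push_cast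
      field_simp
    linear_combination (-(1-w)) * hc - (1-(r:ℂ)^4) * hwid
  clear_value w r
  rw [key]
  -- key modulus inequality: |w - r⁴| ≤ r² |1 - w|
  have hn : Complex.normSq w ≤ r^4 := by
    have := pow_le_pow_left₀ (norm_nonneg w) hw2 2
    rw [Complex.sq_norm] at this
    calc Complex.normSq w ≤ (r^2)^2 := this
      _ = r^4 := by ring
  have habs2 : ‖w - (r:ℂ)^4‖ ≤ r^2 * ‖1 - w‖ := by
    refine le_of_pow_le_pow_left₀ two_ne_zero (by positivity) ?_
    rw [mul_pow, Complex.sq_norm, Complex.sq_norm, Complex.normSq_apply, Complex.normSq_apply]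
    rw [Complex.normSq_apply] at hn
    simp only [← Complex.ofReal_pow, Complex.sub_re, Complex.sub_im, Complex.one_re,
      Complex.one_im, Complex.ofReal_re, Complex.ofReal_im]
    nlinarith [mul_nonneg (sub_nonneg.2 hn) hr4'.le]
  -- finish by estimating the modulus of the fraction
  rw [norm_div, norm_mul, norm_mul, norm_mul]
  have e1 : ‖(2:ℂ)‖ = 2 := by simp
  have e2 : ‖1 - (β:ℂ)‖ = 1 - β := by
    rw [show (1:ℂ) - (β:ℂ) = ((1 - β : ℝ) : ℂ) by push_cast; ring, Complex.norm_real, Real.norm_eq_abs]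
    exact abs_of_nonneg (by linarith)
  have e3 : ‖1 - (r:ℂ)^4‖ = 1 - r^4 := by
    rw [show (1:ℂ) - (r:ℂ)^4 = ((1 - r^4 : ℝ) : ℂ) by push_cast; ring, Complex.norm_real, Real.norm_eq_abs]
    exact abs_of_nonneg (by linarith)
  rw [e1, e2, e3]
  rw [div_le_div_iff₀ (by positivity) hr4']
  nlinarith [mul_le_mul_of_nonneg_left habs2 (by linarith : (0:ℝ) ≤ 2*(1-β)),
    mul_pos habs1w hr4', norm_nonneg (w - (r:ℂ)^4)]
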